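/- arXiv:2208.06629 — 2 statements merged into one kernel-verified Lean document; each statement's English description precedes it below -/
import Mathlib

section
/- For all integers t and n with 1 ≤ t and n ≥ t + 1, U_t(n) ≤ U_t(n − 1) + t. -/
open scoped BigOperators

/-- A lazy transposition on `n` positions, encoded as a triple `(a, b, p)`. -/
abbrev LazyT (n : ℕ) := Fin n × Fin n × ℝ

/-- The triple `(a, b, p)` is a valid lazy transposition: `a ≠ b` and `p ∈ [0,1]`. -/
def LazyT.Valid {n : ℕ} (e : LazyT n) : Prop :=
  e.1 ≠ e.2.1 ∧ 0 ≤ e.2.2 ∧ e.2.2 ≤ 1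

/-- A star transposition: its first coordinate is position `1` (index `0` in `Fin n`). -/
def LazyT.IsStar {n : ℕ} (e : LazyT n) : Prop := (e.1 : ℕ) = 0

/-- `permDist L σ` is the probability that the composition of the independent lazy
transpositions in `L` (applied in order) equals the permutation `σ`. -/
noncomputable def permDist {n : ℕ} : List (LazyT n) → Equiv.Perm (Fin n) → ℝ
  | [], σ => if σ = 1 then 1 else 0
  | e :: L, σ =>
      e.2.2 * permDist L (σ * Equiv.swap e.1 e.2.1) + (1 - e.2.2) * permDist L σ

/-- `L` is a transposition shuffle on `n` points: all entries are valid lazy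
transpositions and the composition is uniformly distributed on `Perm (Fin n)`. -/
def IsShuffle {n : ℕ} (L : List (LazyT n)) : Prop :=
  (∀ e ∈ L, e.Valid) ∧
  ∀ σ : Equiv.Perm (Fin n), permDist L σ = 1 / (n.factorial : ℝ)

/-- `U n` is the minimum length of a transposition shuffle on `n` points. -/
noncomputable def U (n : ℕ) : ℕ :=
  sInf { ℓ : ℕ | ∃ L : List (LazyT n), L.length = ℓ ∧ IsShuffle L }

/-- The probability that, after applying the lazy transpositions in `L`, the `t`
labelled counters starting in positions `1, …, t` end up placed according to the
map `f` (counter `i` in position `f i`). -/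
noncomputable def placeProb {n t : ℕ} (ht : t ≤ n) (L : List (LazyT n))
    (f : Fin t → Fin n) : ℝ :=
  ∑ σ : Equiv.Perm (Fin n),
    if ∀ i : Fin t, σ (Fin.castLE ht i) = f i then permDist L σ else 0

/-- `L` is a `(t,n)`-shuffle: all entries are valid and the final placement of the
`t` counters is uniform over all `n!/(n-t)!` injections. -/
def IsTShuffle {n t : ℕ} (ht : t ≤ n) (L : List (LazyT n)) : Prop :=
  (∀ e ∈ L, e.Valid) ∧
  ∀ f : Fin t → Fin n, Function.Injective f →
    placeProb ht L f = ((n - t).factorial : ℝ) / (n.factorial : ℝ)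

/-- `Ut t n` is the minimum length of a `(t,n)`-shuffle. -/
noncomputable def Ut (t n : ℕ) : ℕ :=
  sInf { ℓ : ℕ | ∃ (ht : t ≤ n) (L : List (LazyT n)), L.length = ℓ ∧ IsTShuffle ht L }

/-- The probability that after applying `L` the set of positions occupied by the
`t` (indistinguishable) counters starting in positions `1, …, t` is exactly `S`. -/
noncomputable def occProb {n t : ℕ} (ht : t ≤ n) (L : List (LazyT n))
    (S : Finset (Fin n)) : ℝ :=
  ∑ σ : Equiv.Perm (Fin n),
    if Finset.image (fun i : Fin t => σ (Fin.castLE ht i)) Finset.univ = S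
    then permDist L σ else 0

/-- `L` shuffles `t` indistinguishable counters over `n` positions: all entries are
valid and the occupied set is uniform over all `n.choose t` subsets of size `t`. -/
def IsIndShuffle {n t : ℕ} (ht : t ≤ n) (L : List (LazyT n)) : Prop :=
  (∀ e ∈ L, e.Valid) ∧
  ∀ S : Finset (Fin n), S.card = t → occProb ht L S = 1 / (n.choose t : ℝ)

/-- `Uhat t n` is the minimum length of a sequence of lazy transpositions shuffling
`t` indistinguishable counters uniformly over `n` positions. -/
noncomputable def Uhat (t n : ℕ) : ℕ :=
  sInf { ℓ : ℕ | ∃ (ht : t ≤ n) (L : List (LazyT n)), L.length = ℓ ∧ IsIndShuffle ht L }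

/-- `Ustar n` is the minimum length of a transposition shuffle on `n` points all of
whose lazy transpositions are star transpositions. -/
noncomputable def Ustar (n : ℕ) : ℕ :=
  sInf { ℓ : ℕ | ∃ L : List (LazyT n), L.length = ℓ ∧ IsShuffle L ∧ ∀ e ∈ L, e.IsStar }

/-- `Utstar t n` is the minimum length of a `(t,n)`-shuffle all of whose lazy
transpositions are star transpositions. -/
noncomputable def Utstar (t n : ℕ) : ℕ :=
  sInf { ℓ : ℕ | ∃ (ht : t ≤ n) (L : List (LazyT n)),
    L.length = ℓ ∧ IsTShuffle ht L ∧ ∀ e ∈ L, e.IsStar }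

namespace SweepAux

open scoped Classical
open Equiv Finset

noncomputable def Pr {N : ℕ} (L : List (LazyT N)) (A : Equiv.Perm (Fin N) → Prop) : ℝ :=
  ∑ σ : Equiv.Perm (Fin N), if A σ then permDist L σ else 0

lemma Pr_congr {N : ℕ} (L : List (LazyT N)) {A B : Equiv.Perm (Fin N) → Prop}
    (h : ∀ σ, A σ ↔ B σ) : Pr L A = Pr L B := by
  unfold Pr
  refine Finset.sum_congr rfl fun σ _ => ?_
  by_cases hσ : A σ
  · rw [if_pos hσ, if_pos ((h σ).1 hσ)]
  · rw [if_neg hσ, if_neg (fun hb => hσ ((h σ).2 hb))]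

lemma Pr_cons {N : ℕ} (e : LazyT N) (L : List (LazyT N)) (A : Equiv.Perm (Fin N) → Prop) :
    Pr (e :: L) A
      = e.2.2 * Pr L (fun σ => A (σ * Equiv.swap e.1 e.2.1)) + (1 - e.2.2) * Pr L A := by
  unfold Pr
  beta_reduce
  rw [Finset.mul_sum, Finset.mul_sum]
  rw [show (∑ σ : Equiv.Perm (Fin N),
      e.2.2 * if A (σ * Equiv.swap e.1 e.2.1) then permDist L σ else 0)
    = ∑ σ : Equiv.Perm (Fin N),
      e.2.2 * if A σ then permDist L (σ * Equiv.swap e.1 e.2.1) else 0 from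
    Fintype.sum_equiv (Equiv.mulRight (Equiv.swap e.1 e.2.1))
      _ _ (fun σ => by
        simp only [Equiv.coe_mulRight]
        rw [mul_assoc, Equiv.swap_mul_self, mul_one]
        rfl)]
  rw [← Finset.sum_add_distrib]
  refine Finset.sum_congr rfl fun σ _ => ?_
  by_cases hσ : A σ <;> simp [hσ, permDist, mul_add]

def embT {m : ℕ} (e : LazyT m) : LazyT (m + 1) := (e.1.castSucc, e.2.1.castSucc, e.2.2)

noncomputable def EP {m : ℕ} (σ : Equiv.Perm (Fin m)) : Equiv.Perm (Fin (m + 1)) :=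
  (finSuccEquivLast.trans (Equiv.optionCongr σ)).trans finSuccEquivLast.symm

@[simp] lemma EP_castSucc {m : ℕ} (σ : Equiv.Perm (Fin m)) (i : Fin m) :
    EP σ i.castSucc = (σ i).castSucc := by
  simp [EP, finSuccEquivLast_castSucc, finSuccEquivLast_symm_some]

@[simp] lemma EP_last {m : ℕ} (σ : Equiv.Perm (Fin m)) :
    EP σ (Fin.last m) = Fin.last m := by
  simp [EP, finSuccEquivLast_last]

lemma swap_castSucc {m : ℕ} (a b i : Fin m) :
    Equiv.swap a.castSucc b.castSucc i.castSucc = (Equiv.swap a b i).castSucc := by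
  rcases eq_or_ne i a with rfl | ha
  · simp
  · rcases eq_or_ne i b with rfl | hb
    · simp
    · rw [Equiv.swap_apply_of_ne_of_ne ha hb,
        Equiv.swap_apply_of_ne_of_ne (by simpa [Fin.castSucc_inj] using ha)
          (by simpa [Fin.castSucc_inj] using hb)]

lemma swap_castSucc_last {m : ℕ} (a b : Fin m) :
    Equiv.swap a.castSucc b.castSucc (Fin.last m) = Fin.last m :=
  Equiv.swap_apply_of_ne_of_ne (Fin.castSucc_lt_last a).ne' (Fin.castSucc_lt_last b).ne'

lemma EP_mul_swap {m : ℕ} (σ : Equiv.Perm (Fin m)) (a b : Fin m) :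
    EP σ * Equiv.swap a.castSucc b.castSucc = EP (σ * Equiv.swap a b) := by
  ext x
  induction x using Fin.lastCases with
  | last => simp [Equiv.Perm.mul_apply, swap_castSucc_last]
  | cast i => simp [Equiv.Perm.mul_apply, swap_castSucc]

lemma EP_injective {m : ℕ} : Function.Injective (EP (m := m)) := by
  intro σ τ h
  ext i
  have := congrArg (fun p : Equiv.Perm (Fin (m + 1)) => p i.castSucc) h
  simp only [EP_castSucc] at this
  exact congrArg Fin.val (Fin.castSucc_injective m this)

lemma EP_eq_one_iff {m : ℕ} (σ : Equiv.Perm (Fin m)) : EP σ = 1 ↔ σ = 1 := by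
  constructor
  · intro h
    ext i
    have := congrArg (fun p : Equiv.Perm (Fin (m + 1)) => p i.castSucc) h
    simp only [EP_castSucc, Equiv.Perm.one_apply] at this
    exact congrArg Fin.val (Fin.castSucc_injective m this)
  · rintro rfl
    ext x
    induction x using Fin.lastCases with
    | last => simp
    | cast i => simp

lemma permDist_map_EP {m : ℕ} (L : List (LazyT m)) (σ : Equiv.Perm (Fin m)) :
    permDist (L.map embT) (EP σ) = permDist L σ := by
  induction L generalizing σ with
  | nil =>
    simp only [List.map_nil, permDist]
    by_cases h : σ = 1
    · simp [h, EP_eq_one_iff]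
    · rw [if_neg (by rwa [EP_eq_one_iff]), if_neg h]
  | cons e L ih =>
    simp only [List.map_cons, permDist, embT]
    rw [EP_mul_swap, ih, ih]

lemma permDist_map_ne {m : ℕ} (L : List (LazyT m)) (σ : Equiv.Perm (Fin (m + 1)))
    (h : σ (Fin.last m) ≠ Fin.last m) : permDist (L.map embT) σ = 0 := by
  induction L generalizing σ with
  | nil =>
    simp only [List.map_nil, permDist]
    rw [if_neg]
    intro hσ; exact h (by simp [hσ])
  | cons e L ih =>
    simp only [List.map_cons, permDist, embT]
    rw [ih _ (by
      simpa [Equiv.Perm.mul_apply, swap_castSucc_last] using h), ih _ h]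
    ring

lemma exists_EP {m : ℕ} (σ : Equiv.Perm (Fin (m + 1))) (h : σ (Fin.last m) = Fin.last m) :
    ∃ τ, σ = EP τ := by
  have hne : ∀ i : Fin m, σ i.castSucc ≠ Fin.last m := by
    intro i hi
    exact absurd (σ.injective (hi.trans h.symm)) (Fin.castSucc_lt_last i).ne
  let g : Fin m → Fin m := fun i => (σ i.castSucc).castPred (hne i)
  have hg : Function.Injective g := by
    intro a b hab
    have : σ a.castSucc = σ b.castSucc := by
      have := congrArg Fin.castSucc hab
      simpa [g, Fin.castSucc_castPred] using this
    exact Fin.castSucc_injective m (σ.injective this)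
  obtain ⟨τ, hτ⟩ : ∃ τ : Equiv.Perm (Fin m), ∀ i, τ i = g i :=
    ⟨Equiv.ofBijective g ((Finite.injective_iff_bijective).1 hg), fun i => rfl⟩
  refine ⟨τ, ?_⟩
  ext x
  induction x using Fin.lastCases with
  | last => simp [h]
  | cast i => simp [hτ, g, Fin.castSucc_castPred]

lemma Pr_map {m : ℕ} (L : List (LazyT m)) (A : Equiv.Perm (Fin (m + 1)) → Prop) :
    Pr (L.map embT) A = Pr L (fun τ => A (EP τ)) := by
  unfold Pr
  rw [show (∑ τ : Equiv.Perm (Fin m), if A (EP τ) then permDist L τ else 0)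
      = ∑ τ : Equiv.Perm (Fin m), if A (EP τ) then permDist (L.map embT) (EP τ) else 0 from
    Finset.sum_congr rfl fun τ _ => by rw [permDist_map_EP]]
  rw [← Finset.sum_image (g := EP)
      (f := fun σ => if A σ then permDist (L.map embT) σ else 0)
      (fun x _ y _ h => EP_injective h)]
  refine (Finset.sum_subset (Finset.subset_univ _) ?_).symm
  intro σ _ hσ
  have hlast : σ (Fin.last m) ≠ Fin.last m := by
    intro h
    obtain ⟨τ, rfl⟩ := exists_EP σ h
    exact hσ (Finset.mem_image_of_mem _ (Finset.mem_univ τ))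
  rw [permDist_map_ne _ _ hlast]
  simp

lemma snoc_inj {α : Type*} {s : ℕ} {F : Fin s → α} {v : α}
    (hF : Function.Injective F) (hv : ∀ i, F i ≠ v) :
    Function.Injective (Fin.snoc F v : Fin (s + 1) → α) := by
  intro a b hab
  induction a using Fin.lastCases with
  | last =>
    induction b using Fin.lastCases with
    | last => rfl
    | cast q => rw [Fin.snoc_last, Fin.snoc_castSucc] at hab; exact absurd hab.symm (hv q)
  | cast p =>
    induction b using Fin.lastCases with
    | last => rw [Fin.snoc_last, Fin.snoc_castSucc] at hab; exact absurd hab (hv p)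
    | cast q =>
      rw [Fin.snoc_castSucc, Fin.snoc_castSucc] at hab
      exact congrArg Fin.castSucc (hF hab)

lemma sum_place_zero {m : ℕ} (L' : List (LazyT m)) {s : ℕ} (P F : Fin s → Fin m)
    (hP : Function.Injective P) (hF : ¬ Function.Injective F) :
    (∑ ρ : Equiv.Perm (Fin m), if ∀ i, ρ (P i) = F i then permDist L' ρ else 0) = 0 := by
  refine Finset.sum_eq_zero fun ρ _ => ?_
  rw [if_neg]
  intro hc
  exact hF fun a b hab => hP (ρ.injective ((hc a).trans (hab.trans (hc b).symm)))

lemma placeProb_eq_Pr {N t : ℕ} (ht : t ≤ N) (L : List (LazyT N)) (f : Fin t → Fin N) :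
    placeProb ht L f = Pr L (fun σ => ∀ i, σ (Fin.castLE ht i) = f i) := by
  unfold placeProb Pr
  exact Finset.sum_congr rfl fun σ _ => by
    by_cases h : ∀ i, σ (Fin.castLE ht i) = f i <;> simp [h]

lemma card_filter_lt {m t : ℕ} (htm : t ≤ m) :
    (Finset.univ.filter (fun x : Fin m => (x : ℕ) < t)).card = t := by
  rw [show Finset.univ.filter (fun x : Fin m => (x : ℕ) < t)
      = Finset.univ.image (Fin.castLE htm) from ?_]
  · rw [Finset.card_image_of_injective _ (Fin.castLE_injective htm), Finset.card_univ,
      Fintype.card_fin]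
  · ext x
    simp only [Finset.mem_filter, Finset.mem_univ, true_and, Finset.mem_image]
    constructor
    · intro hx; exact ⟨⟨(x : ℕ), hx⟩, Fin.ext rfl⟩
    · rintro ⟨j, rfl⟩; exact j.isLt

lemma sum_place_inj {m t : ℕ} (htm : t ≤ m) (L' : List (LazyT m)) (hL' : IsTShuffle htm L') :
    ∀ (k s : ℕ), s + k = t → ∀ (P F : Fin s → Fin m), Function.Injective P →
      (∀ i, (P i : ℕ) < t) → Function.Injective F →
      (∑ ρ : Equiv.Perm (Fin m), if ∀ i, ρ (P i) = F i then permDist L' ρ else 0)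
        = ((m - s).factorial : ℝ) / (m.factorial : ℝ) := by
  intro k
  induction k with
  | zero =>
    intro s hks P F hP hPt hF
    obtain rfl : t = s := by omega
    set π0 : Fin t → Fin t := fun i => ⟨(P i : ℕ), hPt i⟩ with hπ0
    have hπ0i : Function.Injective π0 := by
      intro a b hab
      have h2 : (π0 a : ℕ) = (π0 b : ℕ) := congrArg Fin.val hab
      exact hP (Fin.ext h2)
    let π : Equiv.Perm (Fin t) := Equiv.ofBijective π0 (Finite.injective_iff_bijective.1 hπ0i)
    have hπ : ∀ i, π i = π0 i := fun i => rfl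
    have hPi : ∀ i, P i = Fin.castLE htm (π i) := by
      intro i; exact Fin.ext (by simp [hπ, hπ0])
    have hcond : ∀ ρ : Equiv.Perm (Fin m),
        (∀ i, ρ (P i) = F i) ↔ ∀ j, ρ (Fin.castLE htm j) = (F ∘ π.symm) j := by
      intro ρ
      constructor
      · intro h j
        have := h (π.symm j)
        rw [hPi, Equiv.apply_symm_apply] at this
        simpa [Function.comp] using this
      · intro h i
        have := h (π i)
        simp only [Function.comp_apply, Equiv.symm_apply_apply] at this
        rwa [hPi]
    have : (∑ ρ : Equiv.Perm (Fin m), if ∀ i, ρ (P i) = F i then permDist L' ρ else 0)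
        = placeProb htm L' (F ∘ π.symm) := by
      unfold placeProb
      refine Finset.sum_congr rfl fun ρ _ => ?_
      by_cases h : ∀ i, ρ (P i) = F i
      · rw [if_pos h, if_pos ((hcond ρ).1 h)]
      · rw [if_neg h, if_neg (fun hb => h ((hcond ρ).2 hb))]
    rw [this, hL'.2 _ (hF.comp π.symm.injective)]
  | succ k ih =>
    intro s hks P F hP hPt hF
    have hst : s < t := by omega
    obtain ⟨a0, ha0t, ha0P⟩ : ∃ a0 : Fin m, (a0 : ℕ) < t ∧ ∀ i, P i ≠ a0 := by
      by_contra hcon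
      push_neg at hcon
      have hsub : Finset.univ.filter (fun x : Fin m => (x : ℕ) < t)
          ⊆ Finset.univ.image P := by
        intro x hx
        simp only [Finset.mem_filter, Finset.mem_univ, true_and] at hx
        obtain ⟨i, hi⟩ := hcon x hx
        exact Finset.mem_image.2 ⟨i, Finset.mem_univ i, hi⟩
      have := (Finset.card_le_card hsub).trans Finset.card_image_le
      rw [card_filter_lt htm, Finset.card_univ, Fintype.card_fin] at this
      omega
    have hsplit : ∀ ρ : Equiv.Perm (Fin m),
        (if ∀ i, ρ (P i) = F i then permDist L' ρ else 0)
        = ∑ v : Fin m, if ∀ i : Fin (s + 1), ρ ((Fin.snoc P a0 : Fin (s + 1) → Fin m) i) = (Fin.snoc F v : Fin (s + 1) → Fin m) i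
            then permDist L' ρ else 0 := by
      intro ρ
      have hc : ∀ v : Fin m, (∀ i : Fin (s + 1), ρ ((Fin.snoc P a0 : Fin (s + 1) → Fin m) i) = (Fin.snoc F v : Fin (s + 1) → Fin m) i)
          ↔ ((∀ i, ρ (P i) = F i) ∧ ρ a0 = v) := by
        intro v
        rw [Fin.forall_fin_succ']
        simp only [Fin.snoc_castSucc, Fin.snoc_last]
      by_cases h : ∀ i, ρ (P i) = F i
      · rw [if_pos h]
        rw [show (∑ v : Fin m, if ∀ i : Fin (s + 1), ρ ((Fin.snoc P a0 : Fin (s + 1) → Fin m) i) = (Fin.snoc F v : Fin (s + 1) → Fin m) i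
              then permDist L' ρ else 0)
            = ∑ v : Fin m, if ρ a0 = v then permDist L' ρ else 0 from
          Finset.sum_congr rfl fun v _ => by
            by_cases hv : ρ a0 = v
            · rw [if_pos ((hc v).2 ⟨h, hv⟩), if_pos hv]
            · rw [if_neg (fun hb => hv ((hc v).1 hb).2), if_neg hv]]
        rw [Finset.sum_ite_eq Finset.univ (ρ a0) (fun _ => permDist L' ρ),
          if_pos (Finset.mem_univ _)]
      · rw [if_neg h]
        refine (Finset.sum_eq_zero fun v _ => ?_).symm
        exact if_neg (fun hb => h ((hc v).1 hb).1)
    rw [Finset.sum_congr rfl fun ρ _ => hsplit ρ, Finset.sum_comm]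
    have hval : ∀ v : Fin m,
        (∑ ρ : Equiv.Perm (Fin m),
          if ∀ i : Fin (s + 1), ρ ((Fin.snoc P a0 : Fin (s + 1) → Fin m) i) = (Fin.snoc F v : Fin (s + 1) → Fin m) i
          then permDist L' ρ else 0)
        = if ∀ i, F i ≠ v then ((m - (s + 1)).factorial : ℝ) / (m.factorial : ℝ) else 0 := by
      intro v
      have hP' : Function.Injective (Fin.snoc P a0 : Fin (s + 1) → Fin m) :=
        snoc_inj hP ha0P
      by_cases hv : ∀ i, F i ≠ v
      · rw [if_pos hv]
        refine ih (s + 1) (by omega) _ _ hP' ?_ (snoc_inj hF hv)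
        intro i
        induction i using Fin.lastCases with
        | last => rw [Fin.snoc_last]; exact ha0t
        | cast q => rw [Fin.snoc_castSucc]; exact hPt q
      · rw [if_neg hv]
        push_neg at hv
        obtain ⟨i0, hi0⟩ := hv
        refine sum_place_zero L' _ _ hP' ?_
        intro hinj
        have : (Fin.snoc F v : Fin (s + 1) → Fin m) i0.castSucc
            = (Fin.snoc F v : Fin (s + 1) → Fin m) (Fin.last s) := by
          rw [Fin.snoc_castSucc, Fin.snoc_last, hi0]
        exact absurd (hinj this) (Fin.castSucc_lt_last i0).ne
    rw [Finset.sum_congr rfl fun v _ => hval v]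
    rw [← Finset.sum_filter]
    rw [Finset.sum_const]
    have hcards : (Finset.univ.filter (fun v : Fin m => ∀ i, F i ≠ v)).card = m - s := by
      rw [show Finset.univ.filter (fun v : Fin m => ∀ i, F i ≠ v)
          = Finset.univ \ Finset.univ.image F from ?_]
      · rw [Finset.card_sdiff_of_subset (Finset.subset_univ _),
          Finset.card_image_of_injective _ hF, Finset.card_univ, Finset.card_univ,
          Fintype.card_fin, Fintype.card_fin]
      · ext v
        simp [Finset.mem_image]
    rw [hcards]
    have h1 : m - s = (m - (s + 1)) + 1 := by omega
    rw [h1, Nat.factorial_succ, nsmul_eq_mul]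
    push_cast
    ring
noncomputable def sweepAux (m t : ℕ) : ℕ → ℕ → List (LazyT (m + 1))
  | 0, _ => []
  | k + 1, j =>
      (⟨j % (m + 1), Nat.mod_lt j (Nat.succ_pos m)⟩, Fin.last m,
        (1 : ℝ) / ((m + 2 - t + j : ℕ) : ℝ)) :: sweepAux m t k (j + 1)

lemma sweepAux_length (m t : ℕ) : ∀ k j, (sweepAux m t k j).length = k := by
  intro k
  induction k with
  | zero => intro j; rfl
  | succ k ih => intro j; simp [sweepAux, ih]

lemma sweepAux_valid (m t : ℕ) (htm : t ≤ m) :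
    ∀ k j, j + k ≤ t → ∀ e ∈ sweepAux m t k j, e.Valid := by
  intro k
  induction k with
  | zero => intro j _ e he; simp [sweepAux] at he
  | succ k ih =>
    intro j hjk e he
    simp only [sweepAux, List.mem_cons] at he
    rcases he with rfl | he
    · have hD : (1 : ℝ) ≤ ((m + 2 - t + j : ℕ) : ℝ) := by
        exact_mod_cast (by omega : 1 ≤ m + 2 - t + j)
      refine ⟨?_, ?_, ?_⟩
      · intro h
        have h2 := congrArg Fin.val h
        simp only [Fin.val_last] at h2
        have hj : j % (m + 1) = j := Nat.mod_eq_of_lt (by omega)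
        omega
      · positivity
      · rw [div_le_one (lt_of_lt_of_le zero_lt_one hD)]
        exact hD
    · exact ih (j + 1) (by omega) e he

noncomputable def psi (m t j : ℕ) (c : Fin (m + 1)) : ℝ :=
  if c = Fin.last m then ((m + 1 - t + j : ℕ) : ℝ) / ((m + 1 : ℕ) : ℝ)
  else if j ≤ (c : ℕ) then 1 / ((m + 1 : ℕ) : ℝ) else 0

lemma master {m t : ℕ} (htm : t ≤ m) (M : List (LazyT (m + 1))) {r : ℕ}
    (f : Fin r → Fin (m + 1)) (istar : Fin r) (K : ℝ)
    (Hbase : ∀ g : Fin r → Fin (m + 1), Function.Injective g →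
      (∀ i, (g i : ℕ) < t ∨ g i = Fin.last m) →
      Pr M (fun σ => ∀ i, σ (g i) = f i) = if g istar = Fin.last m then K else 0) :
    ∀ (k j : ℕ), j + k = t → ∀ g : Fin r → Fin (m + 1), Function.Injective g →
      (∀ i, (g i : ℕ) < t ∨ g i = Fin.last m) →
      Pr (sweepAux m t k j ++ M) (fun σ => ∀ i, σ (g i) = f i)
        = psi m t j (g istar) * K := by
  intro k
  induction k with
  | zero =>
    intro j hjk g hg hgv
    have hj : j = t := by omega
    simp only [sweepAux, List.nil_append]
    rw [Hbase g hg hgv, hj]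
    by_cases h : g istar = Fin.last m
    · rw [if_pos h, psi, if_pos h]
      have h2 : m + 1 - t + t = m + 1 := by omega
      rw [h2, div_self (by positivity), one_mul]
    · rw [if_neg h]
      unfold psi
      rw [if_neg h]
      rcases hgv istar with hlt | hl
      · rw [if_neg (by omega), zero_mul]
      · exact absurd hl h
  | succ k ih =>
    intro j hjk g hg hgv
    have hjt : j < t := by omega
    simp only [sweepAux, List.cons_append]
    rw [Pr_cons]
    set a : Fin (m + 1) := (⟨j % (m + 1), Nat.mod_lt j (Nat.succ_pos m)⟩ : Fin (m + 1)) with ha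
    have haj : (a : ℕ) = j := Nat.mod_eq_of_lt (by omega)
    have hanl : a ≠ Fin.last m := by
      intro h
      have h2 : j % (m + 1) = m := congrArg Fin.val h
      have h3 : j % (m + 1) = j := Nat.mod_eq_of_lt (by omega)
      omega
    set g' : Fin r → Fin (m + 1) := fun i => Equiv.swap a (Fin.last m) (g i) with hg'def
    have hig : Function.Injective g' :=
      fun x y hxy => hg ((Equiv.swap a (Fin.last m)).injective hxy)
    have hgv' : ∀ i, (g' i : ℕ) < t ∨ g' i = Fin.last m := by
      intro i
      rcases hgv i with hlt | hl
      · by_cases hia : g i = a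
        · right
          rw [hg'def]
          simp only [hia]
          exact Equiv.swap_apply_left a _
        · left
          rw [hg'def]
          simp only []
          rw [Equiv.swap_apply_of_ne_of_ne hia (by
            intro hc
            rw [hc] at hlt
            simp only [Fin.val_last] at hlt
            omega)]
          exact hlt
      · left
        rw [hg'def]
        simp only [hl]
        rw [Equiv.swap_apply_right, haj]
        exact hjt
    have hrw1 : Pr (sweepAux m t k (j + 1) ++ M)
        (fun σ => ∀ i, (σ * Equiv.swap a (Fin.last m)) (g i) = f i)
        = psi m t (j + 1) (g' istar) * K := by
      rw [Pr_congr _ (fun σ => by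
        constructor
        · intro hc i; exact hc i
        · intro hc i; exact hc i :
          ∀ σ : Equiv.Perm (Fin (m + 1)),
            (∀ i, (σ * Equiv.swap a (Fin.last m)) (g i) = f i) ↔ (∀ i, σ (g' i) = f i))]
      exact ih (j + 1) (by omega) g' hig hgv'
    rw [hrw1, ih (j + 1) (by omega) g hg hgv]
    -- arithmetic
    set X : ℝ := ((m + 1 - t + j : ℕ) : ℝ) with hX
    have hX0 : 0 ≤ X := Nat.cast_nonneg _
    have hD : ((m + 2 - t + j : ℕ) : ℝ) = X + 1 := by
      rw [hX, show m + 2 - t + j = (m + 1 - t + j) + 1 from by omega, Nat.cast_add_one]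
    rw [hD]
    have hXpos : X + 1 > 0 := by positivity
    have hMpos : ((m + 1 : ℕ) : ℝ) > 0 := by positivity
    have psival : ∀ (j' : ℕ) (c : Fin (m + 1)), c ≠ Fin.last m → ¬ (j' ≤ (c : ℕ)) →
        psi m t j' c = 0 := fun j' c h1 h2 => by unfold psi; rw [if_neg h1, if_neg h2]
    have psival2 : ∀ (j' : ℕ) (c : Fin (m + 1)), c ≠ Fin.last m → j' ≤ (c : ℕ) →
        psi m t j' c = 1 / ((m + 1 : ℕ) : ℝ) := fun j' c h1 h2 => by
      unfold psi; rw [if_neg h1, if_pos h2]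
    have psil : ∀ j' : ℕ, psi m t j' (Fin.last m)
        = ((m + 1 - t + j' : ℕ) : ℝ) / ((m + 1 : ℕ) : ℝ) := fun j' => by
      unfold psi; rw [if_pos rfl]
    rcases hgv istar with hlt | hl
    · have hgnl : g istar ≠ Fin.last m := by
        intro hc
        rw [hc] at hlt
        simp only [Fin.val_last] at hlt
        omega
      by_cases hval : (g istar : ℕ) = j
      · have hgia : g istar = a := Fin.ext (hval.trans haj.symm)
        have hgl : g' istar = Fin.last m := by
          rw [hg'def]
          simp only [hgia]
          exact Equiv.swap_apply_left a _
        rw [hgl, psil, psival (j + 1) _ hgnl (by omega), psival2 j _ hgnl (by omega)]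
        rw [show m + 1 - t + (j + 1) = m + 2 - t + j from by omega, hD]
        field_simp
        ring
      · have hgne : g istar ≠ a := fun hc => hval (by rw [hc]; exact haj)
        have hgg : g' istar = g istar := by
          rw [hg'def]
          simp only []
          exact Equiv.swap_apply_of_ne_of_ne hgne hgnl
        rw [hgg]
        by_cases hle : j ≤ (g istar : ℕ)
        · rw [psival2 (j + 1) _ hgnl (by omega), psival2 j _ hgnl hle]
          ring
        · rw [psival (j + 1) _ hgnl (by omega), psival j _ hgnl hle]
          ring
    · have hga : g' istar = a := by
        rw [hg'def]
        simp only [hl]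
        exact Equiv.swap_apply_right a _
      rw [hga, hl, psival (j + 1) _ hanl (by omega), psil (j + 1), psil j]
      rw [show m + 1 - t + (j + 1) = m + 2 - t + j from by omega, hD, ← hX]
      field_simp
      ring
lemma Pr_eq_sum {m s : ℕ} (L' : List (LazyT m)) (P F : Fin s → Fin m) :
    Pr L' (fun ρ => ∀ i, ρ (P i) = F i)
      = ∑ ρ : Equiv.Perm (Fin m), if ∀ i, ρ (P i) = F i then permDist L' ρ else 0 :=
  Finset.sum_congr rfl fun ρ _ => by
    by_cases h : ∀ i, ρ (P i) = F i <;> simp [h]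

lemma base1 {m s : ℕ} (hsm : s + 1 ≤ m) (L' : List (LazyT m)) (hL' : IsTShuffle hsm L')
    (f : Fin (s + 1) → Fin (m + 1)) (istar : Fin (s + 1)) (hf : Function.Injective f)
    (hfl : f istar = Fin.last m) :
    ∀ g : Fin (s + 1) → Fin (m + 1), Function.Injective g →
      (∀ i, (g i : ℕ) < s + 1 ∨ g i = Fin.last m) →
      Pr (L'.map embT) (fun σ => ∀ i, σ (g i) = f i)
        = if g istar = Fin.last m
          then ((m - s).factorial : ℝ) / (m.factorial : ℝ) else 0 := by
  intro g hg hgv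
  rw [Pr_map]
  have hfne : ∀ q : Fin s, f (istar.succAbove q) ≠ Fin.last m := by
    intro q hc
    exact Fin.succAbove_ne istar q (hf (hc.trans hfl.symm))
  by_cases h : g istar = Fin.last m
  · rw [if_pos h]
    have hgne : ∀ q : Fin s, g (istar.succAbove q) ≠ Fin.last m := by
      intro q hc
      exact Fin.succAbove_ne istar q (hg (hc.trans h.symm))
    set P : Fin s → Fin m := fun q => (g (istar.succAbove q)).castPred (hgne q) with hPdef
    set F : Fin s → Fin m := fun q => (f (istar.succAbove q)).castPred (hfne q) with hFdef
    have hP : Function.Injective P := by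
      intro q1 q2 hq
      have hval := congrArg Fin.val hq
      exact Fin.succAbove_right_injective (hg (Fin.ext hval))
    have hF : Function.Injective F := by
      intro q1 q2 hq
      have hval := congrArg Fin.val hq
      exact Fin.succAbove_right_injective (hf (Fin.ext hval))
    have hPt : ∀ q, (P q : ℕ) < s + 1 := by
      intro q
      rcases hgv (istar.succAbove q) with hlt | hl
      · rw [hPdef]; simpa [Fin.coe_castPred] using hlt
      · exact absurd hl (hgne q)
    have hiff : ∀ τ : Equiv.Perm (Fin m),
        (∀ i, EP τ (g i) = f i) ↔ ∀ q : Fin s, τ (P q) = F q := by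
      intro τ
      constructor
      · intro hc q
        have := hc (istar.succAbove q)
        rw [← Fin.castSucc_castPred _ (hgne q), EP_castSucc,
          ← Fin.castSucc_castPred _ (hfne q)] at this
        exact Fin.castSucc_injective m this
      · intro hc i
        rcases eq_or_ne i istar with rfl | hne
        · rw [h, hfl, EP_last]
        · obtain ⟨q, rfl⟩ := Fin.exists_succAbove_eq hne
          rw [← Fin.castSucc_castPred _ (hgne q), EP_castSucc, hc q,
            Fin.castSucc_castPred _ (hfne q)]
    rw [Pr_congr L' hiff, Pr_eq_sum L' P F]
    exact sum_place_inj hsm L' hL' 1 s (by omega) P F hP hPt hF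
  · rw [if_neg h]
    unfold Pr
    refine Finset.sum_eq_zero fun τ _ => if_neg ?_
    intro hc
    by_cases hex : ∃ i', g i' = Fin.last m
    · obtain ⟨i', hi'⟩ := hex
      have h1 := hc i'
      rw [hi', EP_last] at h1
      have hii : i' = istar := hf (h1.symm.trans hfl.symm)
      exact h (hii ▸ hi')
    · push_neg at hex
      have h1 := hc istar
      rw [← Fin.castSucc_castPred _ (hex istar), EP_castSucc, hfl] at h1
      exact (Fin.castSucc_lt_last _).ne h1

lemma exists_last_mem {m t : ℕ} (htm : t ≤ m) (g : Fin (t + 1) → Fin (m + 1))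
    (hg : Function.Injective g) (hgv : ∀ i, (g i : ℕ) < t ∨ g i = Fin.last m) :
    ∃ i, g i = Fin.last m := by
  by_contra hcon
  push_neg at hcon
  have hsub : Finset.univ.image g ⊆ Finset.univ.filter (fun x : Fin (m + 1) => (x : ℕ) < t) := by
    intro x hx
    obtain ⟨i, _, rfl⟩ := Finset.mem_image.1 hx
    rcases hgv i with hlt | hl
    · exact Finset.mem_filter.2 ⟨Finset.mem_univ _, hlt⟩
    · exact absurd hl (hcon i)
  have := Finset.card_le_card hsub
  rw [Finset.card_image_of_injective _ hg, Finset.card_univ, Fintype.card_fin,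
    card_filter_lt (by omega : t ≤ m + 1)] at this
  omega

lemma base2 {m t : ℕ} (htm : t ≤ m) (L' : List (LazyT m)) (hL' : IsTShuffle htm L')
    (f : Fin t → Fin (m + 1)) (hf : Function.Injective f)
    (hfnl : ∀ i, f i ≠ Fin.last m) (v : Fin (m + 1)) :
    ∀ g : Fin (t + 1) → Fin (m + 1), Function.Injective g →
      (∀ i, (g i : ℕ) < t ∨ g i = Fin.last m) →
      Pr (L'.map embT)
        (fun σ => ∀ i, σ (g i) = (Fin.snoc f v : Fin (t + 1) → Fin (m + 1)) i)
        = if g (Fin.last t) = Fin.last m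
          then (if v = Fin.last m then ((m - t).factorial : ℝ) / (m.factorial : ℝ) else 0)
          else 0 := by
  intro g hg hgv
  rw [Pr_map]
  by_cases h : g (Fin.last t) = Fin.last m
  · rw [if_pos h]
    have hgne : ∀ q : Fin t, g q.castSucc ≠ Fin.last m := by
      intro q hc
      exact (Fin.castSucc_lt_last q).ne (hg (hc.trans h.symm))
    by_cases hvl : v = Fin.last m
    · rw [if_pos hvl]
      set P : Fin t → Fin m := fun q => (g q.castSucc).castPred (hgne q) with hPdef
      set F : Fin t → Fin m := fun q => (f q).castPred (hfnl q) with hFdef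
      have hP : Function.Injective P := by
        intro q1 q2 hq
        have hval := congrArg Fin.val hq
        exact Fin.castSucc_injective t (hg (Fin.ext hval))
      have hF : Function.Injective F := by
        intro q1 q2 hq
        have hval := congrArg Fin.val hq
        exact hf (Fin.ext hval)
      have hPt : ∀ q, (P q : ℕ) < t := by
        intro q
        rcases hgv q.castSucc with hlt | hl
        · rw [hPdef]; simpa [Fin.coe_castPred] using hlt
        · exact absurd hl (hgne q)
      have hiff : ∀ τ : Equiv.Perm (Fin m),
          (∀ i, EP τ (g i) = (Fin.snoc f v : Fin (t + 1) → Fin (m + 1)) i)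
            ↔ ∀ q : Fin t, τ (P q) = F q := by
        intro τ
        constructor
        · intro hc q
          have := hc q.castSucc
          rw [Fin.snoc_castSucc, ← Fin.castSucc_castPred _ (hgne q), EP_castSucc,
            ← Fin.castSucc_castPred _ (hfnl q)] at this
          exact Fin.castSucc_injective m this
        · intro hc i
          induction i using Fin.lastCases with
          | last => rw [Fin.snoc_last, h, EP_last, hvl]
          | cast q =>
            rw [Fin.snoc_castSucc, ← Fin.castSucc_castPred _ (hgne q), EP_castSucc, hc q,
              Fin.castSucc_castPred _ (hfnl q)]
      rw [Pr_congr L' hiff, Pr_eq_sum L' P F]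
      exact sum_place_inj htm L' hL' 0 t (by omega) P F hP hPt hF
    · rw [if_neg hvl]
      unfold Pr
      refine Finset.sum_eq_zero fun τ _ => if_neg ?_
      intro hc
      have h1 := hc (Fin.last t)
      rw [Fin.snoc_last, h, EP_last] at h1
      exact hvl h1.symm
  · rw [if_neg h]
    unfold Pr
    refine Finset.sum_eq_zero fun τ _ => if_neg ?_
    intro hc
    obtain ⟨i', hi'⟩ := exists_last_mem htm g hg hgv
    have hine : i' ≠ Fin.last t := fun hcc => h (hcc ▸ hi')
    obtain ⟨q, rfl⟩ := Fin.exists_castSucc_eq.mpr hine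
    have h1 := hc q.castSucc
    rw [Fin.snoc_castSucc, hi', EP_last] at h1
    exact hfnl q h1.symm

lemma Pr_snoc_sum {N t : ℕ} (L : List (LazyT N)) (g0 f : Fin t → Fin N) (w : Fin N) :
    Pr L (fun σ => ∀ i, σ (g0 i) = f i)
      = ∑ v : Fin N, Pr L (fun σ => ∀ i : Fin (t + 1),
          σ ((Fin.snoc g0 w : Fin (t + 1) → Fin N) i)
            = (Fin.snoc f v : Fin (t + 1) → Fin N) i) := by
  unfold Pr
  rw [Finset.sum_comm]
  refine Finset.sum_congr rfl fun σ _ => ?_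
  have hc : ∀ v : Fin N,
      (∀ i : Fin (t + 1), σ ((Fin.snoc g0 w : Fin (t + 1) → Fin N) i)
          = (Fin.snoc f v : Fin (t + 1) → Fin N) i)
        ↔ ((∀ i, σ (g0 i) = f i) ∧ σ w = v) := by
    intro v
    rw [Fin.forall_fin_succ']
    simp only [Fin.snoc_castSucc, Fin.snoc_last]
  by_cases h : ∀ i, σ (g0 i) = f i
  · rw [if_pos h]
    symm
    beta_reduce
    refine Eq.trans (Finset.sum_eq_single (σ w) (fun v _ hv => ?_) (fun hm => ?_)) ?_
    · exact if_neg fun hb => hv ((hc v).1 hb).2.symm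
    · exact absurd (Finset.mem_univ _) hm
    · exact if_pos ((hc (σ w)).2 ⟨h, rfl⟩)
  · rw [if_neg h]
    refine (Finset.sum_eq_zero fun v _ => if_neg fun hb => h ((hc v).1 hb).1).symm
lemma key {m t : ℕ} (ht1 : 1 ≤ t) (htm : t ≤ m) (L' : List (LazyT m))
    (hL' : IsTShuffle htm L') (htn : t ≤ m + 1) :
    IsTShuffle htn (sweepAux m t t 0 ++ L'.map embT) := by
  constructor
  · intro e he
    rcases List.mem_append.1 he with h | h
    · exact sweepAux_valid m t htm t 0 (by omega) e h
    · obtain ⟨e', he', rfl⟩ := List.mem_map.1 h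
      obtain ⟨h1, h2, h3⟩ := hL'.1 e' he'
      exact ⟨fun hcc => h1 (Fin.castSucc_injective m hcc), h2, h3⟩
  · intro f hf
    rw [placeProb_eq_Pr]
    by_cases hlast : ∃ ist, f ist = Fin.last m
    · obtain ⟨ist, hist⟩ := hlast
      obtain ⟨s, rfl⟩ : ∃ s, t = s + 1 := ⟨t - 1, by omega⟩
      have hsm : s + 1 ≤ m := htm
      have hmas := master hsm (L'.map embT) f ist
          (((m - s).factorial : ℝ) / (m.factorial : ℝ))
          (base1 hsm L' hL' f ist hf hist) (s + 1) 0 (by omega)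
          (Fin.castLE htn) (Fin.castLE_injective _) (fun i => Or.inl i.isLt)
      rw [hmas]
      have hne : (Fin.castLE htn ist : Fin (m + 1)) ≠ Fin.last m := by
        intro hcc
        have h2 : (ist : ℕ) = m := congrArg Fin.val hcc
        have h3 := ist.isLt
        omega
      unfold psi
      rw [if_neg hne, if_pos (Nat.zero_le _)]
      rw [show m + 1 - (s + 1) = m - s from by omega, Nat.factorial_succ]
      have hz1 : ((m + 1 : ℕ) : ℝ) ≠ 0 := by positivity
      have hz2 : ((m.factorial : ℕ) : ℝ) ≠ 0 := by
        exact_mod_cast (Nat.factorial_pos m).ne'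
      push_cast
      field_simp
    · push_neg at hlast
      rw [Pr_snoc_sum (sweepAux m t t 0 ++ L'.map embT) (Fin.castLE htn) f (Fin.last m)]
      set g1 : Fin (t + 1) → Fin (m + 1) :=
        (Fin.snoc (Fin.castLE htn) (Fin.last m) : Fin (t + 1) → Fin (m + 1)) with hg1
      have hlastne : ∀ i : Fin t, (Fin.castLE htn i : Fin (m + 1)) ≠ Fin.last m := by
        intro i hcc
        have h2 : (i : ℕ) = m := congrArg Fin.val hcc
        have h3 := i.isLt
        omega
      have hg1inj : Function.Injective g1 := snoc_inj (Fin.castLE_injective _) hlastne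
      have hg1v : ∀ i, (g1 i : ℕ) < t ∨ g1 i = Fin.last m := by
        intro i
        induction i using Fin.lastCases with
        | last => right; rw [hg1]; exact Fin.snoc_last _ _
        | cast q => left; rw [hg1]; rw [Fin.snoc_castSucc]; exact q.isLt
      have hg1last : g1 (Fin.last t) = Fin.last m := by rw [hg1]; exact Fin.snoc_last _ _
      have hma : ∀ v : Fin (m + 1),
          Pr (sweepAux m t t 0 ++ L'.map embT)
            (fun σ => ∀ i, σ (g1 i) = (Fin.snoc f v : Fin (t + 1) → Fin (m + 1)) i)
          = psi m t 0 (g1 (Fin.last t))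
            * (if v = Fin.last m then ((m - t).factorial : ℝ) / (m.factorial : ℝ) else 0) :=
        fun v => master htm (L'.map embT) (Fin.snoc f v) (Fin.last t) _
          (base2 htm L' hL' f hf hlast v) t 0 (by omega) g1 hg1inj hg1v
      rw [Finset.sum_congr rfl fun v _ => hma v]
      rw [hg1last]
      unfold psi
      rw [if_pos rfl, ← Finset.mul_sum,
        Finset.sum_ite_eq' Finset.univ (Fin.last m)
          (fun _ => ((m - t).factorial : ℝ) / (m.factorial : ℝ)),
        if_pos (Finset.mem_univ _)]
      rw [show m + 1 - t + 0 = (m - t) + 1 from by omega,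
        show m + 1 - t = (m - t) + 1 from by omega,
        Nat.factorial_succ (m - t), Nat.factorial_succ m]
      have hz1 : ((m + 1 : ℕ) : ℝ) ≠ 0 := by positivity
      have hz2 : ((m.factorial : ℕ) : ℝ) ≠ 0 := by
        exact_mod_cast (Nat.factorial_pos m).ne'
      push_cast
      field_simp

noncomputable def fullShuffle : (m : ℕ) → List (LazyT m)
  | 0 => []
  | m + 1 => sweepAux m m m 0 ++ (fullShuffle m).map embT

lemma agree_uniq {m : ℕ} (σ σ' : Equiv.Perm (Fin (m + 1)))
    (h : ∀ i : Fin m, σ' i.castSucc = σ i.castSucc) : σ' = σ := by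
  have hinj : ∀ i : Fin m, (σ⁻¹ * σ') i.castSucc = i.castSucc := by
    intro i
    simp only [Equiv.Perm.mul_apply, h i]
    exact σ.symm_apply_apply _
  have hl : (σ⁻¹ * σ') (Fin.last m) = Fin.last m := by
    rcases Fin.eq_castSucc_or_eq_last ((σ⁻¹ * σ') (Fin.last m)) with ⟨j, hj⟩ | hj
    · exfalso
      have h2 := (σ⁻¹ * σ').injective (hj.trans (hinj j).symm)
      exact (Fin.castSucc_lt_last j).ne' h2
    · exact hj
  have hone : σ⁻¹ * σ' = 1 := by
    apply Equiv.ext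
    intro x
    induction x using Fin.lastCases with
    | last => rw [hl]; rfl
    | cast i => rw [hinj i]; rfl
  have := inv_mul_eq_one.1 hone
  exact this.symm

lemma tshuffle_of_shuffle_full {m : ℕ} (L : List (LazyT m)) (h : IsShuffle L)
    (hm : m ≤ m) : IsTShuffle hm L := by
  refine ⟨h.1, fun f hf => ?_⟩
  let σf : Equiv.Perm (Fin m) := Equiv.ofBijective f (Finite.injective_iff_bijective.1 hf)
  have hσf : ∀ i, σf i = f i := fun i => rfl
  have hcl : ∀ i : Fin m, Fin.castLE hm i = i := fun i => Fin.ext rfl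
  unfold placeProb
  rw [show (∑ σ : Equiv.Perm (Fin m),
        if ∀ i, σ (Fin.castLE hm i) = f i then permDist L σ else 0)
      = ∑ σ : Equiv.Perm (Fin m), if σ = σf then permDist L σ else 0 from
    Finset.sum_congr rfl fun σ _ => by
      by_cases hσ : σ = σf
      · rw [if_pos hσ, if_pos (fun i => by rw [hcl i, hσ, hσf])]
      · rw [if_neg hσ, if_neg (fun hcond => hσ (Equiv.ext fun i => by
          rw [← hcl i, hcond i, ← hσf i, hcl i]))]]
  rw [Finset.sum_ite_eq' Finset.univ σf (permDist L), if_pos (Finset.mem_univ _), h.2 σf,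
    Nat.sub_self, Nat.factorial_zero, Nat.cast_one]

lemma shuffle_of_tshuffle_full {m : ℕ} (L : List (LazyT (m + 1))) (hm : m ≤ m + 1)
    (h : IsTShuffle hm L) : IsShuffle L := by
  refine ⟨h.1, fun σ => ?_⟩
  have h2 := h.2 (fun i => σ (Fin.castLE hm i))
    (fun a b hab => Fin.castLE_injective hm (σ.injective hab))
  unfold placeProb at h2
  have hcl : ∀ i : Fin m, Fin.castLE hm i = i.castSucc := fun i => Fin.ext rfl
  rw [show (∑ τ : Equiv.Perm (Fin (m + 1)),
        if ∀ i, τ (Fin.castLE hm i) = σ (Fin.castLE hm i) then permDist L τ else 0)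
      = ∑ τ : Equiv.Perm (Fin (m + 1)), if τ = σ then permDist L τ else 0 from
    Finset.sum_congr rfl fun τ _ => by
      by_cases hτ : τ = σ
      · rw [if_pos hτ, if_pos (fun i => by rw [hτ])]
      · rw [if_neg hτ, if_neg (fun hcond => hτ (agree_uniq σ τ (fun i => by
          have := hcond i
          rwa [hcl i] at this)))]] at h2
  rw [Finset.sum_ite_eq' Finset.univ σ (permDist L), if_pos (Finset.mem_univ _)] at h2
  rw [h2, show m + 1 - m = 1 from by omega, Nat.factorial_one, Nat.cast_one]

lemma isShuffle_fullShuffle : ∀ m, IsShuffle (fullShuffle m) := by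
  intro m
  induction m with
  | zero =>
    constructor
    · intro e he; simp [fullShuffle] at he
    · intro σ
      have hσ : σ = 1 := by ext i; exact i.elim0
      simp [fullShuffle, permDist, hσ]
  | succ m ih =>
    rcases Nat.eq_zero_or_pos m with rfl | hm
    · constructor
      · intro e he
        simp [fullShuffle, sweepAux] at he
      · intro σ
        have hσ : σ = 1 := Equiv.ext fun i => Fin.ext (by
          have h1 := (σ i).isLt
          have h2 := ((1 : Equiv.Perm (Fin (0 + 1))) i).isLt
          omega)
        show permDist (sweepAux 0 0 0 0 ++ (fullShuffle 0).map embT) σ = _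
        simp [sweepAux, fullShuffle, permDist, hσ]
    · exact shuffle_of_tshuffle_full _ (by omega)
        (key hm (le_refl m) (fullShuffle m)
          (tshuffle_of_shuffle_full _ ih (le_refl m)) (by omega))

lemma exists_tshuffle (t : ℕ) (ht1 : 1 ≤ t) :
    ∀ m (htm : t ≤ m), ∃ L : List (LazyT m), IsTShuffle htm L := by
  intro m
  induction m with
  | zero => intro h; omega
  | succ m ih =>
    intro h
    rcases Nat.lt_or_ge t (m + 1) with hlt | hge
    · obtain ⟨L, hL⟩ := ih (by omega)
      exact ⟨_, key ht1 (by omega) L hL h⟩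
    · have ht : t = m + 1 := by omega
      subst ht
      exact ⟨fullShuffle (m + 1),
        tshuffle_of_shuffle_full _ (isShuffle_fullShuffle (m + 1)) h⟩

end SweepAux

theorem sweeping (t n : ℕ) (ht : 1 ≤ t) (hn : t + 1 ≤ n) :
    Ut t n ≤ Ut t (n - 1) + t := by
  obtain ⟨m, rfl⟩ : ∃ m, n = m + 1 := ⟨n - 1, by omega⟩
  have htm : t ≤ m := by omega
  simp only [Nat.add_sub_cancel]
  have hne : {ℓ : ℕ | ∃ (ht : t ≤ m) (L : List (LazyT m)), L.length = ℓ ∧ IsTShuffle ht L}.Nonempty := by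
    obtain ⟨L, hL⟩ := SweepAux.exists_tshuffle t ht m htm
    exact ⟨L.length, htm, L, rfl, hL⟩
  have hmem := Nat.sInf_mem hne
  obtain ⟨h1, L', hlen, hL'⟩ := hmem
  have hlen' : L'.length = Ut t m := hlen
  have hkey := SweepAux.key ht htm L' hL' (by omega)
  have hle : Ut t (m + 1) ≤ t + Ut t m := by
    apply Nat.sInf_le
    refine ⟨by omega, SweepAux.sweepAux m t t 0 ++ L'.map SweepAux.embT, ?_, hkey⟩
    rw [List.length_append, SweepAux.sweepAux_length, List.length_map, hlen']
  omega
end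

section
/- For all integers m, t, n with 0 ≤ m ≤ t ≤ n, U_t(n) ≤ U_{t−m}(n − m) + U_m(n), where by convention U_0(k) = 0 for every k. -/
open scoped BigOperators

namespace SDaux

lemma sum_delta_mul {α : Type*} [Fintype α] [DecidableEq α] (a : α) (h : α → ℝ) :
    ∑ x, (if x = a then (1:ℝ) else 0) * h x = h a := by
  rw [Finset.sum_eq_single a (fun b _ hb => by simp [hb])
    (fun ha => absurd (Finset.mem_univ a) ha)]
  simp

lemma sum_translate {α : Type*} [Group α] [Fintype α] (S : α) (u v : α → ℝ) :
    ∑ ρ, u (ρ * S) * v ρ = ∑ ρ, u ρ * v (ρ * S⁻¹) := by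
  apply Fintype.sum_equiv (Equiv.mulRight S)
  intro ρ; simp

lemma permDist_append {n : ℕ} (A B : List (Fin n × Fin n × ℝ)) (σ : Equiv.Perm (Fin n)) :
    permDist (A ++ B) σ = ∑ τ : Equiv.Perm (Fin n), permDist A τ * permDist B (σ * τ⁻¹) := by
  induction A generalizing σ with
  | nil =>
    simp only [List.nil_append, permDist, sum_delta_mul]
    simp
  | cons e L ih =>
    have hL : permDist ((e :: L) ++ B) σ = e.2.2 * permDist (L ++ B) (σ * Equiv.swap e.1 e.2.1)
        + (1 - e.2.2) * permDist (L ++ B) σ := rfl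
    rw [hL, ih, ih]
    simp only [permDist, add_mul, Finset.sum_add_distrib, mul_assoc, ← Finset.mul_sum]
    congr 2
    rw [sum_translate (Equiv.swap e.1 e.2.1) (fun τ => permDist L τ)
      (fun τ => permDist B (σ * τ⁻¹))]
    apply Finset.sum_congr rfl
    intro τ _
    simp [Equiv.swap_inv, mul_inv_rev, mul_assoc]


end SDaux
def osub {m n : ℕ} (hm : m ≤ n) : Fin (n - m) ≃ {x : Fin n // m ≤ (x : ℕ)} where
  toFun j := ⟨⟨m + (j : ℕ), by have := j.isLt; omega⟩, Nat.le_add_right _ _⟩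
  invFun x := ⟨(x : Fin n).1 - m, by have := (x : Fin n).isLt; have := x.2; omega⟩
  left_inv j := by ext; simp
  right_inv x := by
    have := x.2
    ext
    simp
    omega

def Fm {m n : ℕ} (hm : m ≤ n) (j : Fin (n - m)) : Fin n := (osub hm j : Fin n)

lemma Fm_val {m n : ℕ} (hm : m ≤ n) (j : Fin (n - m)) : (Fm hm j : ℕ) = m + j := rfl

lemma Fm_injective {m n : ℕ} (hm : m ≤ n) : Function.Injective (Fm hm) := by
  intro a b h
  have : (a : ℕ) = b := by
    have := congrArg (fun x : Fin n => (x : ℕ)) h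
    simpa [Fm_val] using this
  exact Fin.ext this

lemma Fm_osub_symm {m n : ℕ} (hm : m ≤ n) (y : {x : Fin n // m ≤ (x : ℕ)}) :
    Fm hm ((osub hm).symm y) = y :=
  congrArg Subtype.val ((osub hm).apply_symm_apply y)

def oext {m n : ℕ} (hm : m ≤ n) (τ : Equiv.Perm (Fin (n - m))) : Equiv.Perm (Fin n) :=
  τ.extendDomain (osub hm)

lemma oext_Fm {m n : ℕ} (hm : m ≤ n) (τ : Equiv.Perm (Fin (n - m))) (j : Fin (n - m)) :
    oext hm τ (Fm hm j) = Fm hm (τ j) :=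
  Equiv.Perm.extendDomain_apply_image τ (osub hm) j

lemma oext_lt {m n : ℕ} (hm : m ≤ n) (τ : Equiv.Perm (Fin (n - m))) {x : Fin n}
    (hx : (x : ℕ) < m) : oext hm τ x = x :=
  Equiv.Perm.extendDomain_apply_not_subtype τ (osub hm) (by omega)

lemma oext_one {m n : ℕ} (hm : m ≤ n) : oext hm 1 = 1 :=
  Equiv.Perm.extendDomain_one _

lemma oext_mul {m n : ℕ} (hm : m ≤ n) (τ τ' : Equiv.Perm (Fin (n - m))) :
    oext hm (τ * τ') = oext hm τ * oext hm τ' :=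
  (Equiv.Perm.extendDomain_mul (osub hm) τ τ').symm

lemma oext_inv {m n : ℕ} (hm : m ≤ n) (τ : Equiv.Perm (Fin (n - m))) :
    oext hm τ⁻¹ = (oext hm τ)⁻¹ :=
  (Equiv.Perm.extendDomain_inv τ (osub hm)).symm

lemma oext_injective {m n : ℕ} (hm : m ≤ n) : Function.Injective (oext hm) :=
  Equiv.Perm.extendDomainHom_injective (osub hm)

lemma swap_oext {m n : ℕ} (hm : m ≤ n) (a b : Fin (n - m)) :
    Equiv.swap (Fm hm a) (Fm hm b) = oext hm (Equiv.swap a b) := by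
  have key : ∀ j, Equiv.swap (Fm hm a) (Fm hm b) (Fm hm j) = Fm hm (Equiv.swap a b j) := by
    intro j
    rcases eq_or_ne j a with rfl | ha
    · simp
    rcases eq_or_ne j b with rfl | hb
    · simp
    · rw [Equiv.swap_apply_of_ne_of_ne (fun h => ha (Fm_injective hm h))
        (fun h => hb (Fm_injective hm h)), Equiv.swap_apply_of_ne_of_ne ha hb]
  apply Equiv.ext
  intro x
  by_cases hx : m ≤ (x : ℕ)
  · obtain ⟨j, rfl⟩ : ∃ j, Fm hm j = x := ⟨(osub hm).symm ⟨x, hx⟩, Fm_osub_symm hm ⟨x, hx⟩⟩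
    rw [key, oext_Fm]
  · push_neg at hx
    rw [oext_lt hm _ hx, Equiv.swap_apply_of_ne_of_ne]
    · intro h; rw [h] at hx; simp [Fm_val] at hx
    · intro h; rw [h] at hx; simp [Fm_val] at hx

lemma exists_oext {m n : ℕ} (hm : m ≤ n) (ρ : Equiv.Perm (Fin n))
    (h : ∀ x : Fin n, (x : ℕ) < m → ρ x = x) : ∃ τ, ρ = oext hm τ := by
  have hp : ∀ x : Fin n, m ≤ (x : ℕ) ↔ m ≤ ((ρ x : Fin n) : ℕ) := by
    intro x
    constructor
    · intro hx
      by_contra hc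
      push_neg at hc
      have := h _ hc
      have := ρ.injective (h (ρ x) hc)
      omega
    · intro hx
      by_contra hc
      push_neg at hc
      rw [h x hc] at hx
      omega
  refine ⟨(osub hm).trans ((ρ.subtypePerm (fun x => (hp x).symm)).trans (osub hm).symm), ?_⟩
  apply Equiv.ext
  intro x
  by_cases hx : m ≤ (x : ℕ)
  · obtain ⟨j, rfl⟩ : ∃ j, Fm hm j = x := ⟨(osub hm).symm ⟨x, hx⟩, Fm_osub_symm hm ⟨x, hx⟩⟩
    rw [oext_Fm]
    show _ = Fm hm ((osub hm).symm _)
    rw [Fm_osub_symm]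
    show ρ (Fm hm j) = ((ρ.subtypePerm (fun x => (hp x).symm)) ((osub hm) j) : Fin n)
    rfl
  · push_neg at hx
    rw [oext_lt hm _ hx, h x hx]
def liftL {m n : ℕ} (hm : m ≤ n) (L : List (Fin (n - m) × Fin (n - m) × ℝ)) :
    List (Fin n × Fin n × ℝ) :=
  L.map fun e => (Fm hm e.1, Fm hm e.2.1, e.2.2)

lemma sum_lift {m n : ℕ} (hm : m ≤ n) (L : List (Fin (n - m) × Fin (n - m) × ℝ))
    (h : Equiv.Perm (Fin n) → ℝ) :
    ∑ ρ : Equiv.Perm (Fin n), permDist (liftL hm L) ρ * h ρ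
      = ∑ τ : Equiv.Perm (Fin (n - m)), permDist L τ * h (oext hm τ) := by
  induction L generalizing h with
  | nil =>
    simp only [liftL, List.map_nil, permDist, SDaux.sum_delta_mul, oext_one]
  | cons e L ih =>
    simp only [liftL, List.map_cons, permDist] at *
    simp only [swap_oext hm e.1 e.2.1]
    simp only [add_mul, Finset.sum_add_distrib, mul_assoc, ← Finset.mul_sum]
    congr 2
    · rw [SDaux.sum_translate (oext hm (Equiv.swap e.1 e.2.1)) (fun ρ => permDist (List.map _ L) ρ)
        (fun ρ => h ρ), ih (fun ρ => h (ρ * (oext hm (Equiv.swap e.1 e.2.1))⁻¹)),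
        SDaux.sum_translate (Equiv.swap e.1 e.2.1) (fun τ => permDist L τ)
        (fun τ => h (oext hm τ))]
      apply Finset.sum_congr rfl
      intro τ _
      congr 2
      rw [← oext_inv, ← oext_mul]
    · exact ih h

open Classical in
lemma sum_fix {m n : ℕ} (hm : m ≤ n) (h : Equiv.Perm (Fin n) → ℝ) :
    ∑ ρ : Equiv.Perm (Fin n), (if ∀ x : Fin n, (x : ℕ) < m → ρ x = x then h ρ else 0)
      = ∑ τ : Equiv.Perm (Fin (n - m)), h (oext hm τ) := by
  rw [← Finset.sum_filter]
  symm
  apply Finset.sum_bij (fun (τ : Equiv.Perm (Fin (n - m))) _ => oext hm τ)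
  · intro τ _
    simp only [Finset.mem_filter, Finset.mem_univ, true_and]
    intro x hx
    exact oext_lt hm τ hx
  · intro τ _ τ' _ hh
    exact oext_injective hm hh
  · intro ρ hρ
    simp only [Finset.mem_filter, Finset.mem_univ, true_and] at hρ
    obtain ⟨τ, rfl⟩ := exists_oext hm ρ hρ
    exact ⟨τ, Finset.mem_univ τ, rfl⟩
  · intro τ _
    rfl
noncomputable def marg {N : ℕ} (L : List (Fin N × Fin N × ℝ)) (x j : Fin N) : ℝ :=
  ∑ w : Equiv.Perm (Fin N), if w x = j then permDist L w else 0

lemma marg_nil {N : ℕ} (x j : Fin N) : marg [] x j = if x = j then 1 else 0 := by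
  unfold marg
  rw [Finset.sum_eq_single (1 : Equiv.Perm (Fin N))]
  · simp [permDist]
  · intro w _ hw; simp [permDist, hw]
  · simp
  
lemma marg_cons {N : ℕ} (a b : Fin N) (p : ℝ) (L : List (Fin N × Fin N × ℝ)) (x j : Fin N) :
    marg ((a, b, p) :: L) x j
      = p * marg L (Equiv.swap a b x) j + (1 - p) * marg L x j := by
  have key : (∑ w : Equiv.Perm (Fin N), if w x = j then permDist L (w * Equiv.swap a b) else 0)
      = ∑ w : Equiv.Perm (Fin N), if w (Equiv.swap a b x) = j then permDist L w else 0 := by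
    apply Fintype.sum_equiv (Equiv.mulRight (Equiv.swap a b))
    intro w
    simp [Equiv.Perm.mul_apply]
  unfold marg
  simp only [permDist]
  rw [Finset.sum_congr rfl (fun w _ => by
    show (if w x = j then p * permDist L (w * Equiv.swap a b) + (1 - p) * permDist L w else 0)
      = p * (if w x = j then permDist L (w * Equiv.swap a b) else 0)
        + (1 - p) * (if w x = j then permDist L w else 0)
    split_ifs <;> ring)]
  rw [Finset.sum_add_distrib, ← Finset.mul_sum, ← Finset.mul_sum, key]

lemma marg_unmentioned {N : ℕ} (L : List (Fin N × Fin N × ℝ)) (x j : Fin N)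
    (hx : ∀ e ∈ L, x ≠ e.1 ∧ x ≠ e.2.1) : marg L x j = if x = j then 1 else 0 := by
  induction L with
  | nil => exact marg_nil x j
  | cons e L ih =>
    obtain ⟨a, b, p⟩ := e
    rw [marg_cons]
    have h := hx (a, b, p) (List.mem_cons_self)
    rw [Equiv.swap_apply_of_ne_of_ne h.1 h.2]
    rw [ih (fun e he => hx e (List.mem_cons_of_mem _ he))]
    ring

noncomputable def stars {n : ℕ} : List (Fin (n + 1)) → List (Fin (n + 1) × Fin (n + 1) × ℝ)
  | [] => []
  | b :: bs => (0, b, 1 / ((bs.length : ℝ) + 2)) :: stars bs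

lemma stars_mem {n : ℕ} (bs : List (Fin (n + 1))) (e) (he : e ∈ stars bs) :
    e.1 = 0 ∧ e.2.1 ∈ bs := by
  induction bs with
  | nil => simp [stars] at he
  | cons b bs ih =>
    simp only [stars, List.mem_cons] at he
    rcases he with rfl | he
    · exact ⟨rfl, List.mem_cons_self⟩
    · exact ⟨(ih he).1, List.mem_cons_of_mem _ (ih he).2⟩

lemma marg_stars {n : ℕ} (bs : List (Fin (n + 1))) (hnd : bs.Nodup)
    (h0 : ∀ b ∈ bs, b ≠ 0) (j : Fin (n + 1)) :
    marg (stars bs) 0 j = if j = 0 ∨ j ∈ bs then 1 / ((bs.length : ℝ) + 1) else 0 := by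
  induction bs with
  | nil =>
    rw [stars, marg_nil]
    simp only [List.not_mem_nil, or_false, List.length_nil, Nat.cast_zero, zero_add, div_one]
    rcases eq_or_ne j 0 with rfl | hj
    · simp
    · simp [hj, Ne.symm hj]
  | cons b bs ih =>
    have hb0 : b ≠ 0 := h0 b (List.mem_cons_self)
    have hbbs : b ∉ bs := (List.nodup_cons.mp hnd).1
    rw [stars, marg_cons, Equiv.swap_apply_left]
    rw [marg_unmentioned (stars bs) b j ?side]
    case side =>
      intro e he
      obtain ⟨h1, h2⟩ := stars_mem bs e he
      exact ⟨h1 ▸ hb0, fun h => hbbs (h ▸ h2)⟩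
    rw [ih (List.nodup_cons.mp hnd).2 (fun x hx => h0 x (List.mem_cons_of_mem _ hx))]
    have hr1 : ((bs.length : ℝ) + 1) ≠ 0 := by positivity
    have hr2 : ((bs.length : ℝ) + 2) ≠ 0 := by positivity
    have hlen : (((b :: bs).length : ℝ)) = (bs.length : ℝ) + 1 := by
      push_cast [List.length_cons]
      ring
    rw [hlen]
    rcases eq_or_ne j b with rfl | hjb
    · have hc2 : ¬ (j = 0 ∨ j ∈ bs) := by
        rintro (rfl | h)
        · exact hb0 rfl
        · exact hbbs h
      rw [if_pos rfl, if_neg hc2, if_pos (Or.inr (List.mem_cons_self))]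
      field_simp
      ring
    · rw [if_neg (fun h => hjb h.symm)]
      by_cases hj : j = 0 ∨ j ∈ bs
      · have hj3 : j = 0 ∨ j ∈ b :: bs := by
          rcases hj with h | h
          · exact Or.inl h
          · exact Or.inr (List.mem_cons_of_mem _ h)
        rw [if_pos hj, if_pos hj3]
        field_simp
        ring
      · have hj3 : ¬ (j = 0 ∨ j ∈ b :: bs) := by
          rintro (h | h)
          · exact hj (Or.inl h)
          · rcases List.mem_cons.mp h with rfl | h
            · exact hjb rfl
            · exact hj (Or.inr h)
        rw [if_neg hj, if_neg hj3]
        ring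
lemma stars_valid {n : ℕ} (bs : List (Fin (n + 1))) (h0 : ∀ b ∈ bs, b ≠ 0) :
    ∀ e ∈ stars bs, LazyT.Valid e := by
  induction bs with
  | nil => intro e he; simp [stars] at he
  | cons b bs ih =>
    intro e he
    rcases List.mem_cons.mp he with rfl | he
    · refine ⟨Ne.symm (h0 b (List.mem_cons_self)), by positivity, ?_⟩
      rw [div_le_one (by positivity)]
      have : (0:ℝ) ≤ (bs.length : ℝ) := Nat.cast_nonneg _
      linarith
    · exact ih (fun x hx => h0 x (List.mem_cons_of_mem _ hx)) e he

lemma liftL_valid {m n : ℕ} (hm : m ≤ n) (L : List (LazyT (n - m)))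
    (h : ∀ e ∈ L, LazyT.Valid e) : ∀ e ∈ liftL hm L, LazyT.Valid e := by
  intro e he
  obtain ⟨e', he', rfl⟩ := List.mem_map.mp he
  obtain ⟨h1, h2, h3⟩ := h e' he'
  exact ⟨fun hh => h1 (Fm_injective hm hh), h2, h3⟩

lemma exists_full_shuffle : ∀ n, ∃ L : List (LazyT n), IsShuffle L := by
  intro n
  induction n with
  | zero =>
    refine ⟨[], fun e he => absurd he List.not_mem_nil, fun σ => ?_⟩
    have hσ : σ = 1 := Equiv.ext fun x => x.elim0
    simp [permDist, hσ, Nat.factorial]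
  | succ n ih =>
    obtain ⟨L, hLv, hLd⟩ := ih
    have h1 : 1 ≤ n + 1 := Nat.le_add_left _ _
    set bs : List (Fin (n + 1)) := List.ofFn (fun i : Fin n => i.succ) with hbs
    have hnd : bs.Nodup := List.nodup_ofFn.mpr (Fin.succ_injective n)
    have h0 : ∀ b ∈ bs, b ≠ 0 := by
      intro b hb
      obtain ⟨i, rfl⟩ := List.mem_ofFn.mp hb
      exact Fin.succ_ne_zero i
    have hlen : bs.length = n := List.length_ofFn
    have hmem : ∀ j : Fin (n + 1), j = 0 ∨ j ∈ bs := by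
      intro j
      rcases eq_or_ne j 0 with rfl | hj
      · exact Or.inl rfl
      · right
        rw [hbs, List.mem_ofFn]
        exact ⟨j.pred hj, Fin.succ_pred _ _⟩
    have hmarg : ∀ j : Fin (n + 1), marg (stars bs) 0 j = 1 / ((n : ℝ) + 1) := by
      intro j
      rw [marg_stars bs hnd h0 j, if_pos (hmem j), hlen]
    refine ⟨liftL h1 L ++ stars bs, ?_, ?_⟩
    · intro e he
      rcases List.mem_append.mp he with he | he
      · exact liftL_valid h1 L hLv e he
      · exact stars_valid bs h0 e he
    · intro σ
      rw [SDaux.permDist_append]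
      rw [sum_lift h1 L (fun ρ => permDist (stars bs) (σ * ρ⁻¹))]
      rw [Finset.sum_congr rfl (fun τ _ => by rw [hLd τ])]
      rw [← Finset.mul_sum]
      have hsum : (∑ τ : Equiv.Perm (Fin (n + 1 - 1)),
          permDist (stars bs) (σ * (oext h1 τ)⁻¹)) = marg (stars bs) 0 (σ 0) := by
        rw [← sum_fix h1 (fun ρ => permDist (stars bs) (σ * ρ⁻¹))]
        unfold marg
        apply Fintype.sum_equiv ((Equiv.inv (Equiv.Perm (Fin (n + 1)))).trans (Equiv.mulLeft σ))
        intro ρ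
        simp only [Equiv.trans_apply, Equiv.inv_apply, Equiv.coe_mulLeft]
        have hiff : (∀ x : Fin (n + 1), (x : ℕ) < 1 → ρ x = x) ↔ (σ * ρ⁻¹) 0 = σ 0 := by
          constructor
          · intro h
            have h00 : ρ 0 = 0 := h 0 (by simp)
            have : ρ⁻¹ 0 = 0 := Equiv.Perm.inv_eq_iff_eq.mpr h00.symm
            rw [Equiv.Perm.mul_apply, this]
          · intro h
            have h0 : ρ⁻¹ 0 = 0 := σ.injective h
            have h00 : ρ 0 = 0 := by
              conv_lhs => rw [← h0]
              exact Equiv.apply_symm_apply ρ 0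
            intro x hx
            have : x = 0 := Fin.ext (by simpa using Nat.lt_one_iff.mp hx)
            rw [this, h00]
        rw [if_congr hiff rfl rfl]
      rw [hsum, hmarg]
      rw [Nat.factorial_succ]
      have hf0 : (n.factorial : ℝ) ≠ 0 := Nat.cast_ne_zero.mpr n.factorial_ne_zero
      have hn0 : ((n : ℝ) + 1) ≠ 0 := by positivity
      push_cast
      field_simp
lemma exists_perm_extend {n t : ℕ} (ht : t ≤ n) (f : Fin t → Fin n) (hf : Function.Injective f) :
    ∃ σ₀ : Equiv.Perm (Fin n), ∀ i : Fin t, σ₀ (Fin.castLE ht i) = f i := by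
  classical
  have hce : Function.Injective (Fin.castLE ht) := Fin.castLE_injective ht
  let χ : {x : Fin n // x ∈ Set.range (Fin.castLE ht)} ≃ {x : Fin n // x ∈ Set.range f} :=
    (Equiv.ofInjective _ hce).symm.trans (Equiv.ofInjective f hf)
  refine ⟨χ.extendSubtype, fun i => ?_⟩
  rw [Equiv.extendSubtype_apply_of_mem χ (Fin.castLE ht i) ⟨i, rfl⟩]
  have h1 : (⟨Fin.castLE ht i, ⟨i, rfl⟩⟩ : {x : Fin n // x ∈ Set.range (Fin.castLE ht)})
      = Equiv.ofInjective _ hce i := Subtype.ext rfl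
  show ((χ ⟨Fin.castLE ht i, ⟨i, rfl⟩⟩ : {x : Fin n // x ∈ Set.range f}) : Fin n) = f i
  rw [show χ ⟨Fin.castLE ht i, ⟨i, rfl⟩⟩ = Equiv.ofInjective f hf i from by
    simp only [χ, Equiv.trans_apply, h1, Equiv.symm_apply_apply]]
  rfl

lemma count_extensions {n t : ℕ} (ht : t ≤ n) (f : Fin t → Fin n) (hf : Function.Injective f)
    (c : ℝ) :
    (∑ σ : Equiv.Perm (Fin n), if ∀ i : Fin t, σ (Fin.castLE ht i) = f i then c else 0)
      = ((n - t).factorial : ℝ) * c := by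
  obtain ⟨σ₀, hσ₀⟩ := exists_perm_extend ht f hf
  rw [← Fintype.sum_equiv (Equiv.mulLeft σ₀)
    (fun π => if ∀ x : Fin n, (x : ℕ) < t → π x = x then c else 0)
    (fun σ => if ∀ i : Fin t, σ (Fin.castLE ht i) = f i then c else 0) ?_]
  · rw [sum_fix ht (fun _ => c)]
    rw [Finset.sum_const, Finset.card_univ, Fintype.card_perm, Fintype.card_fin, nsmul_eq_mul]
  · intro π
    have hiff : (∀ x : Fin n, (x : ℕ) < t → π x = x)
        ↔ (∀ i : Fin t, (σ₀ * π) (Fin.castLE ht i) = f i) := by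
      constructor
      · intro h i
        have hx : ((Fin.castLE ht i : Fin n) : ℕ) < t := i.isLt
        rw [Equiv.Perm.mul_apply, h _ hx, hσ₀]
      · intro h x hx
        have h1 := h ⟨(x : ℕ), hx⟩
        have hcast : Fin.castLE ht ⟨(x : ℕ), hx⟩ = x := Fin.ext rfl
        rw [hcast] at h1
        have h2 := hσ₀ ⟨(x : ℕ), hx⟩
        rw [hcast] at h2
        exact σ₀.injective (by rw [← h2] at h1; exact h1)
    exact if_congr hiff rfl rfl

lemma isTShuffle_of_isShuffle {n t : ℕ} (ht : t ≤ n) (L : List (LazyT n))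
    (h : IsShuffle L) : IsTShuffle ht L := by
  refine ⟨h.1, fun f hf => ?_⟩
  unfold placeProb
  rw [Finset.sum_congr rfl (fun σ _ => by rw [h.2 σ])]
  rw [count_extensions ht f hf]
  rw [mul_one_div]

lemma exists_tshuffle {n t : ℕ} (ht : t ≤ n) :
    ∃ L : List (LazyT n), IsTShuffle ht L := by
  obtain ⟨L, hL⟩ := exists_full_shuffle n
  exact ⟨L, isTShuffle_of_isShuffle ht L hL⟩
noncomputable def Dfun {m t n : ℕ} (hm : m ≤ t) (hmn : m ≤ n) (f : Fin t → Fin n)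
    (L2 : List (LazyT n)) (g : Fin (t - m) → Fin (n - m)) : ℝ :=
  ∑ π : Equiv.Perm (Fin n),
    if (∀ i : Fin m, π (Fin.castLE hmn i) = f (Fin.castLE hm i)) ∧
       (∀ j : Fin (t - m), π (Fm hmn (g j)) = f (Fm hm j)) then permDist L2 π else 0

lemma D_zero {m t n : ℕ} (hm : m ≤ t) (hmn : m ≤ n) (f : Fin t → Fin n)
    (hf : Function.Injective f) (L2 : List (LazyT n)) (g : Fin (t - m) → Fin (n - m))
    (hg : ¬ Function.Injective g) : Dfun hm hmn f L2 g = 0 := by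
  apply Finset.sum_eq_zero
  intro π _
  rw [if_neg]
  rintro ⟨hPa, hPb⟩
  apply hg
  intro a b hab
  have ha := hPb a
  have hb := hPb b
  rw [hab] at ha
  exact Fm_injective hm (hf (ha.symm.trans hb))

lemma sum_D {m t n : ℕ} (hm : m ≤ t) (hmn : m ≤ n) (f : Fin t → Fin n)
    (hf : Function.Injective f) (L2 : List (LazyT n)) :
    (∑ g : Fin (t - m) → Fin (n - m), Dfun hm hmn f L2 g)
      = placeProb hmn L2 (fun i => f (Fin.castLE hm i)) := by
  unfold Dfun
  rw [Finset.sum_comm]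
  apply Finset.sum_congr rfl
  intro π _
  by_cases hPa : ∀ i : Fin m, π (Fin.castLE hmn i) = f (Fin.castLE hm i)
  · have hge : ∀ j : Fin (t - m), m ≤ ((π⁻¹ (f (Fm hm j))) : ℕ) := by
      intro j
      by_contra hc
      push_neg at hc
      have h1' := hPa ⟨((π⁻¹ (f (Fm hm j))) : ℕ), hc⟩
      rw [show Fin.castLE hmn ⟨((π⁻¹ (f (Fm hm j))) : ℕ), hc⟩ = π⁻¹ (f (Fm hm j)) from
        Fin.ext rfl,
        show π (π⁻¹ (f (Fm hm j))) = f (Fm hm j) from Equiv.apply_symm_apply π _] at h1'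
      have h3 := congrArg Fin.val (hf h1')
      simp only [Fm_val, Fin.coe_castLE] at h3
      omega
    have hFg₀ : ∀ j, Fm hmn ((osub hmn).symm ⟨π⁻¹ (f (Fm hm j)), hge j⟩) = π⁻¹ (f (Fm hm j)) :=
      fun j => Fm_osub_symm hmn _
    have hbiff : ∀ g : Fin (t - m) → Fin (n - m),
        (∀ j : Fin (t - m), π (Fm hmn (g j)) = f (Fm hm j)) ↔
        g = fun j => (osub hmn).symm ⟨π⁻¹ (f (Fm hm j)), hge j⟩ := by
      intro g
      rw [funext_iff]
      apply forall_congr'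
      intro j
      constructor
      · intro h
        apply Fm_injective hmn
        rw [hFg₀]
        exact Equiv.Perm.eq_inv_iff_eq.mpr h
      · intro h
        rw [h, hFg₀, Equiv.Perm.inv_def, Equiv.apply_symm_apply]
    have e1 : ∀ g : Fin (t - m) → Fin (n - m),
        (if (∀ i : Fin m, π (Fin.castLE hmn i) = f (Fin.castLE hm i)) ∧
            (∀ j : Fin (t - m), π (Fm hmn (g j)) = f (Fm hm j)) then permDist L2 π else 0)
        = (if g = (fun j => (osub hmn).symm ⟨π⁻¹ (f (Fm hm j)), hge j⟩)
            then permDist L2 π else 0) :=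
      fun g => if_congr ((and_iff_right hPa).trans (hbiff g)) rfl rfl
    rw [Finset.sum_congr rfl (fun g _ => e1 g)]
    rw [Finset.sum_ite_eq' Finset.univ _ (fun _ => permDist L2 π)]
    rw [if_pos (Finset.mem_univ _), if_pos hPa]
  · rw [if_neg hPa]
    apply Finset.sum_eq_zero
    intro g _
    exact if_neg (fun hh => hPa hh.1)

lemma compose {m t n : ℕ} (hm : m ≤ t) (ht : t ≤ n) (hst : t - m ≤ n - m) (hmn : m ≤ n)
    (L1 : List (LazyT (n - m))) (h1 : IsTShuffle hst L1)
    (L2 : List (LazyT n)) (h2 : IsTShuffle hmn L2) :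
    IsTShuffle ht (liftL hmn L1 ++ L2) := by
  constructor
  · intro e he
    rcases List.mem_append.mp he with he | he
    · exact liftL_valid hmn L1 h1.1 e he
    · exact h2.1 e he
  intro f hf
  have key : ∀ (π : Equiv.Perm (Fin n)) (τ : Equiv.Perm (Fin (n - m))),
      (∀ i : Fin t, π (oext hmn τ (Fin.castLE ht i)) = f i) ↔
      ((∀ i : Fin m, π (Fin.castLE hmn i) = f (Fin.castLE hm i)) ∧
       (∀ j : Fin (t - m), π (Fm hmn (τ (Fin.castLE hst j))) = f (Fm hm j))) := by
    intro π τ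
    constructor
    · intro h
      constructor
      · intro i
        have h' := h (Fin.castLE hm i)
        rw [show Fin.castLE ht (Fin.castLE hm i) = Fin.castLE hmn i from Fin.ext rfl,
          oext_lt hmn τ (show ((Fin.castLE hmn i : Fin n) : ℕ) < m from i.isLt)] at h'
        exact h'
      · intro j
        have h' := h (Fm hm j)
        rw [show Fin.castLE ht (Fm hm j) = Fm hmn (Fin.castLE hst j) from Fin.ext rfl,
          oext_Fm] at h'
        exact h'
    · rintro ⟨ha, hb⟩ i
      rcases Nat.lt_or_ge (i : ℕ) m with hi | hi
      · have h' := ha ⟨(i : ℕ), hi⟩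
        rw [show Fin.castLE hm ⟨(i : ℕ), hi⟩ = i from Fin.ext rfl] at h'
        rw [show Fin.castLE ht i = Fin.castLE hmn ⟨(i : ℕ), hi⟩ from Fin.ext rfl,
          oext_lt hmn τ (show ((Fin.castLE hmn ⟨(i : ℕ), hi⟩ : Fin n) : ℕ) < m from hi)]
        exact h'
      · have hj : (i : ℕ) - m < t - m := by have := i.isLt; omega
        have h' := hb ⟨(i : ℕ) - m, hj⟩
        rw [show Fm hm ⟨(i : ℕ) - m, hj⟩ = i from Fin.ext (by
          show m + ((i : ℕ) - m) = (i : ℕ); omega)] at h'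
        rw [show Fin.castLE ht i = Fm hmn (Fin.castLE hst ⟨(i : ℕ) - m, hj⟩) from Fin.ext (by
          show (i : ℕ) = m + ((i : ℕ) - m); omega), oext_Fm]
        exact h'
  unfold placeProb
  have step1 : (∑ σ : Equiv.Perm (Fin n), if ∀ i : Fin t, σ (Fin.castLE ht i) = f i
        then permDist (liftL hmn L1 ++ L2) σ else 0)
      = ∑ ρ : Equiv.Perm (Fin n), permDist (liftL hmn L1) ρ *
          (∑ σ : Equiv.Perm (Fin n), if ∀ i : Fin t, σ (Fin.castLE ht i) = f i
            then permDist L2 (σ * ρ⁻¹) else 0) := by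
    have e1 : ∀ σ : Equiv.Perm (Fin n),
        (if ∀ i : Fin t, σ (Fin.castLE ht i) = f i
          then permDist (liftL hmn L1 ++ L2) σ else 0)
        = ∑ ρ : Equiv.Perm (Fin n), permDist (liftL hmn L1) ρ *
            (if ∀ i : Fin t, σ (Fin.castLE ht i) = f i then permDist L2 (σ * ρ⁻¹) else 0) := by
      intro σ
      by_cases hc : ∀ i : Fin t, σ (Fin.castLE ht i) = f i
      · rw [if_pos hc, SDaux.permDist_append]
        exact Finset.sum_congr rfl (fun ρ _ => by rw [if_pos hc])
      · rw [if_neg hc]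
        symm
        exact Finset.sum_eq_zero (fun ρ _ => by rw [if_neg hc, mul_zero])
    rw [Finset.sum_congr rfl (fun σ _ => e1 σ)]
    rw [Finset.sum_comm]
    apply Finset.sum_congr rfl
    intro ρ _
    rw [← Finset.mul_sum]
  rw [step1, sum_lift hmn L1 (fun ρ => ∑ σ : Equiv.Perm (Fin n),
    if ∀ i : Fin t, σ (Fin.castLE ht i) = f i then permDist L2 (σ * ρ⁻¹) else 0)]
  have step2 : ∀ τ : Equiv.Perm (Fin (n - m)),
      (∑ σ : Equiv.Perm (Fin n),
        if ∀ i : Fin t, σ (Fin.castLE ht i) = f i then permDist L2 (σ * (oext hmn τ)⁻¹) else 0)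
      = Dfun hm hmn f L2 (fun j => τ (Fin.castLE hst j)) := by
    intro τ
    unfold Dfun
    apply Fintype.sum_equiv (Equiv.mulRight (oext hmn τ)⁻¹)
    intro σ
    simp only [Equiv.coe_mulRight]
    have hr : ∀ x : Fin n, (σ * (oext hmn τ)⁻¹) (oext hmn τ x) = σ x := by
      intro x
      rw [Equiv.Perm.mul_apply, Equiv.Perm.inv_def, Equiv.symm_apply_apply]
    have hiff := key (σ * (oext hmn τ)⁻¹) τ
    simp only [hr] at hiff
    exact if_congr hiff rfl rfl
  have e2 : ∀ τ : Equiv.Perm (Fin (n - m)),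
      permDist L1 τ * (∑ σ : Equiv.Perm (Fin n),
        if ∀ i : Fin t, σ (Fin.castLE ht i) = f i then permDist L2 (σ * (oext hmn τ)⁻¹) else 0)
      = permDist L1 τ * Dfun hm hmn f L2 (fun j => τ (Fin.castLE hst j)) :=
    fun τ => by rw [step2 τ]
  rw [Finset.sum_congr rfl (fun τ _ => e2 τ)]
  have step3 : (∑ τ : Equiv.Perm (Fin (n - m)),
        permDist L1 τ * Dfun hm hmn f L2 (fun j => τ (Fin.castLE hst j)))
      = ∑ g : Fin (t - m) → Fin (n - m), placeProb hst L1 g * Dfun hm hmn f L2 g := by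
    have e3 : ∀ τ : Equiv.Perm (Fin (n - m)),
        permDist L1 τ * Dfun hm hmn f L2 (fun j => τ (Fin.castLE hst j))
        = ∑ g : Fin (t - m) → Fin (n - m), if (∀ j : Fin (t - m), τ (Fin.castLE hst j) = g j)
            then permDist L1 τ * Dfun hm hmn f L2 g else 0 := by
      intro τ
      have e4 : ∀ g : Fin (t - m) → Fin (n - m),
          (if (∀ j : Fin (t - m), τ (Fin.castLE hst j) = g j)
            then permDist L1 τ * Dfun hm hmn f L2 g else 0)
          = (if g = (fun j => τ (Fin.castLE hst j))
            then permDist L1 τ * Dfun hm hmn f L2 g else 0) := by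
        intro g
        refine if_congr ?_ rfl rfl
        rw [funext_iff]
        exact forall_congr' (fun j => eq_comm)
      rw [Finset.sum_congr rfl (fun g _ => e4 g)]
      rw [Finset.sum_ite_eq' Finset.univ _ (fun g => permDist L1 τ * Dfun hm hmn f L2 g)]
      rw [if_pos (Finset.mem_univ _)]
    rw [Finset.sum_congr rfl (fun τ _ => e3 τ)]
    rw [Finset.sum_comm]
    apply Finset.sum_congr rfl
    intro g _
    have e5 : (∑ τ : Equiv.Perm (Fin (n - m)),
        if (∀ j : Fin (t - m), τ (Fin.castLE hst j) = g j)
          then permDist L1 τ * Dfun hm hmn f L2 g else 0)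
        = (∑ τ : Equiv.Perm (Fin (n - m)),
            if (∀ j : Fin (t - m), τ (Fin.castLE hst j) = g j) then permDist L1 τ else 0)
          * Dfun hm hmn f L2 g := by
      rw [Finset.sum_mul]
      exact Finset.sum_congr rfl (fun τ _ => by rw [ite_mul, zero_mul])
    rw [e5]
    rfl
  rw [step3]
  have hsub : n - m - (t - m) = n - t := by omega
  have step4 : (∑ g : Fin (t - m) → Fin (n - m), placeProb hst L1 g * Dfun hm hmn f L2 g)
      = ((n - t).factorial : ℝ) / ((n - m).factorial : ℝ)
        * ∑ g : Fin (t - m) → Fin (n - m), Dfun hm hmn f L2 g := by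
    rw [Finset.mul_sum]
    apply Finset.sum_congr rfl
    intro g _
    by_cases hg : Function.Injective g
    · rw [h1.2 g hg, hsub]
    · rw [D_zero hm hmn f hf L2 g hg, mul_zero, mul_zero]
  rw [step4, sum_D hm hmn f hf L2,
    h2.2 (fun i => f (Fin.castLE hm i)) (hf.comp (Fin.castLE_injective hm))]
  have h1n : ((n - m).factorial : ℝ) ≠ 0 := Nat.cast_ne_zero.mpr (Nat.factorial_ne_zero _)
  have h2n : ((n).factorial : ℝ) ≠ 0 := Nat.cast_ne_zero.mpr (Nat.factorial_ne_zero _)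
  field_simp
theorem simple_divide (m t n : ℕ) (hm : m ≤ t) (ht : t ≤ n) :
    Ut t n ≤ Ut (t - m) (n - m) + Ut m n := by
  have hst : t - m ≤ n - m := Nat.sub_le_sub_right ht m
  have hmn : m ≤ n := hm.trans ht
  unfold Ut
  have hne1 : {ℓ : ℕ | ∃ (h : t - m ≤ n - m) (L : List (LazyT (n - m))),
      L.length = ℓ ∧ IsTShuffle h L}.Nonempty := by
    obtain ⟨L, hL⟩ := exists_tshuffle hst
    exact ⟨L.length, hst, L, rfl, hL⟩
  have hne2 : {ℓ : ℕ | ∃ (h : m ≤ n) (L : List (LazyT n)),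
      L.length = ℓ ∧ IsTShuffle h L}.Nonempty := by
    obtain ⟨L, hL⟩ := exists_tshuffle hmn
    exact ⟨L.length, hmn, L, rfl, hL⟩
  obtain ⟨h1', L1, hlen1, hL1⟩ := Nat.sInf_mem hne1
  obtain ⟨h2', L2, hlen2, hL2⟩ := Nat.sInf_mem hne2
  apply Nat.sInf_le
  refine ⟨ht, liftL h2' L1 ++ L2, ?_, compose hm ht h1' h2' L1 hL1 L2 hL2⟩
  rw [List.length_append]
  unfold liftL
  rw [List.length_map, hlen1, hlen2]
end
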